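/- arXiv:1902.08392 — 7 statements merged into one kernel-verified Lean document; each statement's English description precedes it below -/
import Mathlib

section
/- For the function f defined by f'(t) = 1/√(1+2f(t)²), f(0)=0, extended oddly, one has (1/2)f(t) ≤ t·f'(t) ≤ f(t) for all t ≥ 0. -/
theorem stmt_3 (f : ℝ → ℝ) (hf0 : f 0 = 0)
    (hodd : ∀ t : ℝ, f (-t) = -f t)
    (hderiv : ∀ t : ℝ, 0 ≤ t → HasDerivAt f (1 / Real.sqrt (1 + 2 * f t ^ 2)) t) :
    ∀ t : ℝ, 0 ≤ t → (1 / 2) * f t ≤ t * deriv f t ∧ t * deriv f t ≤ f t := by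
  have hu : ∀ x : ℝ, (0:ℝ) < 1 + 2 * f x ^ 2 := fun x => by positivity
  have hs : ∀ x : ℝ, (0:ℝ) < Real.sqrt (1 + 2 * f x ^ 2) :=
    fun x => Real.sqrt_pos.2 (hu x)
  have hsq : ∀ x : ℝ, Real.sqrt (1 + 2 * f x ^ 2) ^ 2 = 1 + 2 * f x ^ 2 :=
    fun x => Real.sq_sqrt (hu x).le
  set F : ℝ → ℝ := fun x => f x * Real.sqrt (1 + 2 * f x ^ 2) with hF
  have hFd : ∀ x : ℝ, 0 ≤ x →
      HasDerivAt F ((1 + 4 * f x ^ 2) / (1 + 2 * f x ^ 2)) x := by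
    intro x hx
    have hfx := hderiv x hx
    have hu' : HasDerivAt (fun y => 1 + 2 * f y ^ 2)
        (2 * (2 * f x ^ 1 * (1 / Real.sqrt (1 + 2 * f x ^ 2)))) x :=
      ((hfx.pow 2).const_mul 2).const_add 1
    have hsd : HasDerivAt (fun y => Real.sqrt (1 + 2 * f y ^ 2))
        ((2 * (2 * f x ^ 1 * (1 / Real.sqrt (1 + 2 * f x ^ 2)))) /
          (2 * Real.sqrt (1 + 2 * f x ^ 2))) x :=
      hu'.sqrt (hu x).ne'
    have := hfx.fun_mul hsd
    refine this.congr_deriv ?_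
    have h1 := hsq x
    have h2 := (hs x).ne'
    field_simp
    nlinarith [hsq x, hs x]
  -- F x - x is monotone, 2 x - F x is monotone on Ici 0
  have hcont : ContinuousOn F (Set.Ici 0) :=
    fun x hx => ((hFd x hx).continuousAt).continuousWithinAt
  have key : ∀ G : ℝ → ℝ, ∀ g' : ℝ → ℝ,
      (∀ x : ℝ, 0 ≤ x → HasDerivAt G (g' x) x) → (∀ x : ℝ, 0 ≤ x → 0 ≤ g' x) →
      MonotoneOn G (Set.Ici 0) := by
    intro G g' hG hg'
    apply monotoneOn_of_deriv_nonneg (convex_Ici 0)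
      (fun x hx => ((hG x hx).continuousAt).continuousWithinAt)
    · intro x hx
      rw [interior_Ici] at hx
      exact (hG x (le_of_lt hx)).differentiableAt.differentiableWithinAt
    · intro x hx
      rw [interior_Ici] at hx
      rw [(hG x hx.le).deriv]
      exact hg' x hx.le
  have mono1 : MonotoneOn (fun x => F x - x) (Set.Ici 0) := by
    apply key _ (fun x => (1 + 4 * f x ^ 2) / (1 + 2 * f x ^ 2) - 1)
    · intro x hx
      exact (hFd x hx).sub (hasDerivAt_id x)
    · intro x hx
      rw [sub_nonneg, le_div_iff₀ (hu x)]
      nlinarith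
  have mono2 : MonotoneOn (fun x => 2 * x - F x) (Set.Ici 0) := by
    apply key _ (fun x => 2 - (1 + 4 * f x ^ 2) / (1 + 2 * f x ^ 2))
    · intro x hx
      have := ((hasDerivAt_id x).const_mul 2).fun_sub (hFd x hx)
      simpa using this
    · intro x hx
      rw [sub_nonneg, div_le_iff₀ (hu x)]
      nlinarith
  intro t ht
  have hF0 : F 0 = 0 := by simp [hF, hf0]
  have h1 : t ≤ F t := by
    have := mono1 (Set.self_mem_Ici) (Set.mem_Ici.2 ht) ht
    simp only [hF0] at this
    linarith
  have h2 : F t ≤ 2 * t := by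
    have := mono2 (Set.self_mem_Ici) (Set.mem_Ici.2 ht) ht
    simp only [hF0] at this
    linarith
  have hdt : deriv f t = 1 / Real.sqrt (1 + 2 * f t ^ 2) := (hderiv t ht).deriv
  rw [hdt]
  have hst := hs t
  have h1' : t ≤ f t * Real.sqrt (1 + 2 * f t ^ 2) := h1
  have h2' : f t * Real.sqrt (1 + 2 * f t ^ 2) ≤ 2 * t := h2
  constructor
  · rw [mul_one_div, le_div_iff₀ hst]
    linarith
  · rw [mul_one_div, div_le_iff₀ hst]
    linarith
end

section
/- For the function f defined by f'(t) = 1/√(1+2f(t)²), f(0)=0, extended oddly, one has |f(t)| ≤ 2^{1/4}·|t|^{1/2} for all t ∈ ℝ. -/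
theorem stmt_4 (f : ℝ → ℝ) (hf0 : f 0 = 0)
    (hodd : ∀ t : ℝ, f (-t) = -f t)
    (hderiv : ∀ t : ℝ, 0 ≤ t → HasDerivAt f (1 / Real.sqrt (1 + 2 * f t ^ 2)) t) :
    ∀ t : ℝ, |f t| ≤ (2 : ℝ) ^ ((1 : ℝ) / 4) * |t| ^ ((1 : ℝ) / 2) := by
  have hpos : ∀ x : ℝ, (0:ℝ) < 1 + 2 * f x ^ 2 := fun x => by positivity
  have keyineq : ∀ x : ℝ, 2 * f x * (1 / Real.sqrt (1 + 2 * f x ^ 2)) ≤ Real.sqrt 2 := by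
    intro x
    have hs : (0:ℝ) < Real.sqrt (1 + 2 * f x ^ 2) := Real.sqrt_pos.2 (hpos x)
    rw [mul_one_div, div_le_iff₀ hs]
    have h1 : 2 * f x ≤ Real.sqrt (4 * f x ^ 2) := by
      rw [show (4:ℝ) * f x ^ 2 = (2 * f x) ^ 2 by ring, Real.sqrt_sq_eq_abs]
      exact le_abs_self _
    have h2 : Real.sqrt (4 * f x ^ 2) ≤ Real.sqrt (2 * (1 + 2 * f x ^ 2)) :=
      Real.sqrt_le_sqrt (by nlinarith)
    calc 2 * f x ≤ Real.sqrt (2 * (1 + 2 * f x ^ 2)) := h1.trans h2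
      _ = Real.sqrt 2 * Real.sqrt (1 + 2 * f x ^ 2) := Real.sqrt_mul (by norm_num) _
  have key : ∀ t : ℝ, 0 ≤ t → f t ^ 2 ≤ Real.sqrt 2 * t := by
    intro t ht
    set G : ℝ → ℝ := fun s => Real.sqrt 2 * s - f s ^ 2 with hG
    have hGd : ∀ x : ℝ, 0 ≤ x →
        HasDerivAt G (Real.sqrt 2 - 2 * f x * (1 / Real.sqrt (1 + 2 * f x ^ 2))) x := by
      intro x hx
      have h1 : HasDerivAt (fun s : ℝ => Real.sqrt 2 * s) (Real.sqrt 2) x := by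
        simpa using (hasDerivAt_id x).const_mul (Real.sqrt 2)
      have h2 := (hderiv x hx).pow 2
      have h := h1.sub h2
      exact h.congr_deriv (by norm_num)
    have hmono : MonotoneOn G (Set.Ici (0:ℝ)) := by
      apply monotoneOn_of_deriv_nonneg (convex_Ici 0)
      · intro x hx
        exact ((hGd x hx).continuousAt).continuousWithinAt
      · intro x hx
        rw [interior_Ici] at hx
        exact ((hGd x (le_of_lt hx)).differentiableAt).differentiableWithinAt
      · intro x hx
        rw [interior_Ici] at hx
        rw [(hGd x (le_of_lt hx)).deriv]
        have := keyineq x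
        linarith
    have h0 : G 0 ≤ G t := hmono (by simp) (by simpa using ht) ht
    simp only [hG, hf0] at h0
    nlinarith [h0]
  have main : ∀ t : ℝ, 0 ≤ t → |f t| ≤ (2 : ℝ) ^ ((1 : ℝ) / 4) * t ^ ((1 : ℝ) / 2) := by
    intro t ht
    have h1 : |f t| = Real.sqrt (f t ^ 2) := (Real.sqrt_sq_eq_abs _).symm
    have h2 : Real.sqrt (f t ^ 2) ≤ Real.sqrt (Real.sqrt 2 * t) :=
      Real.sqrt_le_sqrt (key t ht)
    have h3 : Real.sqrt (Real.sqrt 2 * t) = Real.sqrt (Real.sqrt 2) * Real.sqrt t :=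
      Real.sqrt_mul (Real.sqrt_nonneg 2) t
    have h4 : Real.sqrt (Real.sqrt 2) = (2 : ℝ) ^ ((1 : ℝ) / 4) := by
      rw [Real.sqrt_eq_rpow, Real.sqrt_eq_rpow, ← Real.rpow_mul (by norm_num : (0:ℝ) ≤ 2)]
      norm_num
    have h5 : Real.sqrt t = t ^ ((1 : ℝ) / 2) := Real.sqrt_eq_rpow t
    rw [h1]
    rw [h3, h4, h5] at h2
    exact h2
  intro t
  rcases le_total 0 t with ht | ht
  · rw [abs_of_nonneg ht]; exact main t ht
  · have : f t = - f (-t) := by have h := hodd (-t); rw [neg_neg] at h; linarith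
    rw [show |f t| = |f (-t)| by rw [this, abs_neg], show |t| = -t by exact abs_of_nonpos ht]
    exact main (-t) (by linarith)
end

section
/- For the function f defined by f'(t) = 1/√(1+2f(t)²), f(0)=0, extended oddly, there exists a constant C > 0 such that |f(t)| ≥ C|t| for |t| ≤ 1 and |f(t)| ≥ C|t|^{1/2} for |t| ≥ 1. -/
theorem stmt_5 (f : ℝ → ℝ) (hf0 : f 0 = 0)
    (hodd : ∀ t : ℝ, f (-t) = -f t)
    (hderiv : ∀ t : ℝ, 0 ≤ t → HasDerivAt f (1 / Real.sqrt (1 + 2 * f t ^ 2)) t) :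
    ∃ C : ℝ, 0 < C ∧
      (∀ t : ℝ, |t| ≤ 1 → C * |t| ≤ |f t|) ∧
      (∀ t : ℝ, 1 ≤ |t| → C * |t| ^ ((1 : ℝ) / 2) ≤ |f t|) := by
  set s : ℝ → ℝ := fun t => Real.sqrt (1 + 2 * f t ^ 2) with hs
  have hs_pos : ∀ t : ℝ, 0 < s t := fun t => Real.sqrt_pos.mpr (by positivity)
  have hs_ge1 : ∀ t : ℝ, 1 ≤ s t := fun t => by
    rw [show (1:ℝ) = Real.sqrt 1 by simp]
    exact Real.sqrt_le_sqrt (by nlinarith [sq_nonneg (f t)])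
  have hcont : ContinuousOn f (Set.Ici 0) := fun t ht =>
    (hderiv t ht).continuousAt.continuousWithinAt
  -- f is monotone on [0, ∞)
  have hmono : MonotoneOn f (Set.Ici 0) := by
    apply monotoneOn_of_hasDerivWithinAt_nonneg (convex_Ici 0) hcont
      (f' := fun t => 1 / s t)
    · intro x hx
      rw [interior_Ici] at hx
      exact (hderiv x hx.le).hasDerivWithinAt
    · intro x hx
      positivity
  have hf_nonneg : ∀ t : ℝ, 0 ≤ t → 0 ≤ f t := fun t ht => by
    have := hmono (Set.self_mem_Ici) ht ht
    rwa [hf0] at this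
  -- f t ≤ t on [0, ∞)
  have hf_le : ∀ t : ℝ, 0 ≤ t → f t ≤ t := by
    have hm : MonotoneOn (fun t => t - f t) (Set.Ici 0) := by
      apply monotoneOn_of_hasDerivWithinAt_nonneg (convex_Ici 0)
        (Continuous.continuousOn (by continuity) |>.sub hcont)
        (f' := fun t => 1 - 1 / s t)
      · intro x hx
        rw [interior_Ici] at hx
        exact ((hasDerivAt_id x).sub (hderiv x hx.le)).hasDerivWithinAt
      · intro x hx
        have h1 := hs_ge1 x
        have h2 := hs_pos x
        have : 1 / s x ≤ 1 := by
          rw [div_le_one h2]; exact h1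
        linarith
    intro t ht
    have := hm (Set.self_mem_Ici) ht ht
    simp only [hf0, sub_zero] at this
    linarith
  have h3 : (0:ℝ) < Real.sqrt 3 := Real.sqrt_pos.mpr (by norm_num)
  -- f t ≥ t / √3 on [0, 1]
  have hlow : ∀ t : ℝ, 0 ≤ t → t ≤ 1 → t / Real.sqrt 3 ≤ f t := by
    have hm : MonotoneOn (fun t => f t - t / Real.sqrt 3) (Set.Icc 0 1) := by
      apply monotoneOn_of_hasDerivWithinAt_nonneg (convex_Icc 0 1)
        ((hcont.mono Set.Icc_subset_Ici_self).sub
          (Continuous.continuousOn (by continuity)))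
        (f' := fun t => 1 / s t - 1 / Real.sqrt 3)
      · intro x hx
        rw [interior_Icc] at hx
        exact ((hderiv x hx.1.le).sub
          ((hasDerivAt_id x).div_const _)).hasDerivWithinAt
      · intro x hx
        rw [interior_Icc] at hx
        have hfx : f x ≤ 1 := le_trans (hf_le x hx.1.le) hx.2.le
        have hfx0 : 0 ≤ f x := hf_nonneg x hx.1.le
        have hsx : s x ≤ Real.sqrt 3 := Real.sqrt_le_sqrt (by nlinarith)
        have := hs_pos x
        have : 1 / Real.sqrt 3 ≤ 1 / s x :=
          one_div_le_one_div_of_le this hsx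
        linarith
    intro t ht0 ht1
    have := hm (Set.mem_Icc.mpr ⟨le_refl 0, by norm_num⟩)
      (Set.mem_Icc.mpr ⟨ht0, ht1⟩) ht0
    simp only [hf0] at this
    have h0 : (0:ℝ) - 0 / Real.sqrt 3 = 0 := by ring
    rw [h0] at this
    linarith
  have hf1 : 1 / Real.sqrt 3 ≤ f 1 := by
    simpa using hlow 1 zero_le_one le_rfl
  have hf1sq : 1 / 3 ≤ f 1 ^ 2 := by
    have : (1 / Real.sqrt 3) ^ 2 ≤ f 1 ^ 2 :=
      pow_le_pow_left₀ (by positivity) hf1 2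
    rwa [div_pow, one_pow, Real.sq_sqrt (by norm_num : (3:ℝ) ≥ 0)] at this
  -- f t ^ 2 ≥ t / 3 on [1, ∞)
  have hsq : ∀ t : ℝ, 1 ≤ t → t / 3 ≤ f t ^ 2 := by
    have hm : MonotoneOn (fun t => f t ^ 2 - t / 3) (Set.Ici 1) := by
      apply monotoneOn_of_hasDerivWithinAt_nonneg (convex_Ici 1)
        (((hcont.mono (Set.Ici_subset_Ici.mpr zero_le_one)).pow 2).sub
          (Continuous.continuousOn (by continuity)))
        (f' := fun t => 2 * f t * (1 / s t) - 1 / 3)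
      · intro x hx
        rw [interior_Ici] at hx
        have hx1 : 1 < x := hx
        have hd := hderiv x (by linarith : (0:ℝ) ≤ x)
        have : HasDerivAt (fun t => f t ^ 2) (2 * f x * (1 / s x)) x := by
          have := hd.fun_pow 2
          refine this.congr_deriv ?_
          push_cast
          ring
        exact (this.sub ((hasDerivAt_id x).div_const 3)).hasDerivWithinAt
      · intro x hx
        rw [interior_Ici] at hx
        have hx1 : 1 < x := hx
        have hfx : 1 / Real.sqrt 3 ≤ f x := le_trans hf1
          (hmono (Set.mem_Ici.mpr zero_le_one) (Set.mem_Ici.mpr (by linarith)) hx1.le)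
        have hfx0 : 0 < f x := lt_of_lt_of_le (by positivity) hfx
        have hfxsq : 1 / 3 ≤ f x ^ 2 := by
          have : (1 / Real.sqrt 3) ^ 2 ≤ f x ^ 2 :=
            pow_le_pow_left₀ (by positivity) hfx 2
          rwa [div_pow, one_pow, Real.sq_sqrt (by norm_num : (3:ℝ) ≥ 0)] at this
        have hsx : s x ≤ 6 * f x := by
          rw [hs]
          rw [show 6 * f x = Real.sqrt ((6 * f x) ^ 2) by
            rw [Real.sqrt_sq (by positivity)]]
          exact Real.sqrt_le_sqrt (by nlinarith)
        have hspos := hs_pos x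
        have : 1 / 3 ≤ 2 * f x * (1 / s x) := by
          rw [mul_one_div, le_div_iff₀ hspos]
          nlinarith
        linarith
    intro t ht
    have := hm (Set.self_mem_Ici) (Set.mem_Ici.mpr ht) ht
    simp only at this
    nlinarith
  refine ⟨1 / Real.sqrt 3, by positivity, ?_, ?_⟩
  · intro t ht
    rcases le_or_gt 0 t with h | h
    · rw [abs_of_nonneg h, abs_of_nonneg (hf_nonneg t h)]
      rw [abs_of_nonneg h] at ht
      have := hlow t h ht
      rw [one_div, inv_mul_eq_div]
      exact this
    · rw [abs_of_neg h]
      rw [abs_of_neg h] at ht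
      have h' : 0 ≤ -t := by linarith
      have := hlow (-t) h' ht
      rw [hodd t] at this
      rw [abs_of_nonpos (by linarith [hf_nonneg (-t) h', hodd t] :  f t ≤ 0)]
      rw [one_div, inv_mul_eq_div]
      linarith [hodd t]
  · intro t ht
    have hat : (0:ℝ) ≤ |t| := abs_nonneg t
    have key : |t| / 3 ≤ f |t| ^ 2 := hsq |t| ht
    have hfabs : |f t| = f |t| := by
      rcases le_or_gt 0 t with h | h
      · rw [abs_of_nonneg h, abs_of_nonneg (hf_nonneg t h)]
      · have h' : (0:ℝ) ≤ -t := by linarith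
        have hneg : f t = -f (-t) := by rw [hodd]; ring
        rw [abs_of_neg h, hneg, abs_neg, abs_of_nonneg (hf_nonneg _ h')]
    rw [hfabs]
    have hfpos : 0 ≤ f |t| := hf_nonneg _ hat
    have h12 : |t| ^ ((1:ℝ)/2) = Real.sqrt |t| := (Real.sqrt_eq_rpow _).symm
    rw [h12]
    have hsqrt : Real.sqrt (|t| / 3) ≤ f |t| := by
      rw [show f |t| = Real.sqrt (f |t| ^ 2) by rw [Real.sqrt_sq hfpos]]
      exact Real.sqrt_le_sqrt key
    have heq : Real.sqrt (|t| / 3) = Real.sqrt |t| / Real.sqrt 3 := by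
      rw [Real.sqrt_div hat]
    calc 1 / Real.sqrt 3 * Real.sqrt |t| = Real.sqrt |t| / Real.sqrt 3 := by ring
      _ = Real.sqrt (|t| / 3) := heq.symm
      _ ≤ f |t| := hsqrt
end

section
/- For the function f defined by f'(t) = 1/√(1+2f(t)²), f(0)=0, extended oddly, one has |f(t)·f'(t)| ≤ 1/√2 for all t ∈ ℝ. -/
theorem stmt_6 (f : ℝ → ℝ) (hf0 : f 0 = 0)
    (hodd : ∀ t : ℝ, f (-t) = -f t)
    (hderiv : ∀ t : ℝ, 0 ≤ t → HasDerivAt f (1 / Real.sqrt (1 + 2 * f t ^ 2)) t) :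
    ∀ t : ℝ, |f t * deriv f t| ≤ 1 / Real.sqrt 2 := by
  have key : ∀ t : ℝ, HasDerivAt f (1 / Real.sqrt (1 + 2 * f t ^ 2)) t := by
    intro t
    rcases le_or_gt 0 t with h | h
    · exact hderiv t h
    · have h1 := hderiv (-t) (by linarith)
      have h2 := (h1.comp t (hasDerivAt_neg t)).neg
      have hfeq : (fun x : ℝ => -f (-x)) = f := funext fun x => by rw [hodd]; ring
      change HasDerivAt (fun x : ℝ => -f (-x)) _ t at h2
      rw [hfeq] at h2
      have hval : -(1 / Real.sqrt (1 + 2 * f (-t) ^ 2) * -1)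
          = 1 / Real.sqrt (1 + 2 * f t ^ 2) := by
        rw [hodd]; ring_nf
      rwa [hval] at h2
  intro t
  rw [(key t).deriv]
  set a := f t with ha
  have hs : (0:ℝ) < 1 + 2 * a ^ 2 := by positivity
  have hsq : (0:ℝ) < Real.sqrt (1 + 2 * a ^ 2) := Real.sqrt_pos.mpr hs
  have h2 : Real.sqrt 2 * |a| = Real.sqrt (2 * a ^ 2) := by
    rw [Real.sqrt_mul (by norm_num : (0:ℝ) ≤ 2), Real.sqrt_sq_eq_abs]
  have h3 : Real.sqrt (2 * a ^ 2) ≤ Real.sqrt (1 + 2 * a ^ 2) :=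
    Real.sqrt_le_sqrt (by nlinarith)
  rw [abs_mul, abs_of_nonneg (by positivity : (0:ℝ) ≤ 1 / Real.sqrt (1 + 2 * a ^ 2)),
    mul_one_div, div_le_div_iff₀ hsq (by positivity)]
  nlinarith [h2, h3, abs_nonneg a, Real.sqrt_nonneg (2:ℝ)]
end

section
/- For the function f defined by f'(t) = 1/√(1+2f(t)²), f(0)=0, extended oddly, and for every ξ > 0, there exists a constant C(ξ) > 0 such that f(ξt)² ≤ C(ξ)·f(t)² for all t ∈ ℝ. -/
theorem stmt_7 (f : ℝ → ℝ) (hf0 : f 0 = 0)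
    (hodd : ∀ t : ℝ, f (-t) = -f t)
    (hderiv : ∀ t : ℝ, 0 ≤ t → HasDerivAt f (1 / Real.sqrt (1 + 2 * f t ^ 2)) t) :
    ∀ ξ : ℝ, 0 < ξ → ∃ C : ℝ, 0 < C ∧ ∀ t : ℝ, f (ξ * t) ^ 2 ≤ C * f t ^ 2 := by
  intro ξ hξ
  have hcont : ContinuousOn f (Set.Ici 0) := fun x hx =>
    ((hderiv x hx).continuousAt).continuousWithinAt
  have hmono : MonotoneOn f (Set.Ici 0) := by
    apply monotoneOn_of_deriv_nonneg (convex_Ici 0) hcont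
    · intro x hx
      rw [interior_Ici] at hx
      exact (hderiv x hx.le).differentiableAt.differentiableWithinAt
    · intro x hx
      rw [interior_Ici] at hx
      rw [(hderiv x hx.le).deriv]
      positivity
  have hfnn : ∀ t : ℝ, 0 ≤ t → 0 ≤ f t := by
    intro t ht
    have := hmono Set.self_mem_Ici ht ht
    rwa [hf0] at this
  -- derivative of g
  have hgderiv : ∀ x : ℝ, 0 ≤ x → HasDerivAt (fun t => ξ * f t - f (ξ * t))
      (ξ * (1 / Real.sqrt (1 + 2 * f x ^ 2)) - 1 / Real.sqrt (1 + 2 * f (ξ * x) ^ 2) * ξ) x := by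
    intro x hx
    have h1 : HasDerivAt (fun t : ℝ => ξ * t) ξ x := by
      simpa using (hasDerivAt_id x).const_mul ξ
    have h2 : HasDerivAt (fun t => f (ξ * t)) (1 / Real.sqrt (1 + 2 * f (ξ * x) ^ 2) * ξ) x :=
      HasDerivAt.comp x (hderiv (ξ * x) (by positivity)) h1
    exact ((hderiv x hx).const_mul ξ).sub h2
  have key : ∀ t : ℝ, 0 ≤ t → f (ξ * t) ≤ max 1 ξ * f t := by
    intro t ht
    rcases le_or_gt ξ 1 with h1 | h1
    · have : f (ξ * t) ≤ f t := by
        apply hmono (Set.mem_Ici.mpr (by positivity)) ht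
        nlinarith
      calc f (ξ * t) ≤ f t := this
        _ = 1 * f t := (one_mul _).symm
        _ ≤ max 1 ξ * f t := by
            apply mul_le_mul_of_nonneg_right (le_max_left _ _) (hfnn t ht)
    · -- ξ ≥ 1 : g monotone
      have hgmono : MonotoneOn (fun t => ξ * f t - f (ξ * t)) (Set.Ici 0) := by
        apply monotoneOn_of_deriv_nonneg (convex_Ici 0)
        · exact fun x hx => ((hgderiv x hx).continuousAt).continuousWithinAt
        · intro x hx
          rw [interior_Ici] at hx
          exact (hgderiv x hx.le).differentiableAt.differentiableWithinAt
        · intro x hx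
          rw [interior_Ici] at hx
          rw [(hgderiv x (le_of_lt hx)).deriv]
          have hx' : (0:ℝ) < x := hx
          have hle : f x ≤ f (ξ * x) := by
            apply hmono (Set.mem_Ici.mpr hx'.le) (Set.mem_Ici.mpr (by positivity))
            nlinarith
          have hxnn := hfnn x hx'.le
          have hsq : 1 + 2 * f x ^ 2 ≤ 1 + 2 * f (ξ * x) ^ 2 := by nlinarith
          have hs : Real.sqrt (1 + 2 * f x ^ 2) ≤ Real.sqrt (1 + 2 * f (ξ * x) ^ 2) :=
            Real.sqrt_le_sqrt hsq
          have hpos : 0 < Real.sqrt (1 + 2 * f x ^ 2) := Real.sqrt_pos.mpr (by positivity)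
          have hinv : 1 / Real.sqrt (1 + 2 * f (ξ * x) ^ 2) ≤ 1 / Real.sqrt (1 + 2 * f x ^ 2) :=
            one_div_le_one_div_of_le hpos hs
          nlinarith
      have := hgmono Set.self_mem_Ici ht ht
      simp only [mul_zero, hf0] at this
      have : f (ξ * t) ≤ ξ * f t := by linarith
      calc f (ξ * t) ≤ ξ * f t := this
        _ ≤ max 1 ξ * f t := mul_le_mul_of_nonneg_right (le_max_right _ _) (hfnn t ht)
  refine ⟨(max 1 ξ) ^ 2, by positivity, ?_⟩
  have main : ∀ t : ℝ, 0 ≤ t → f (ξ * t) ^ 2 ≤ max 1 ξ ^ 2 * f t ^ 2 := by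
    intro t ht
    have h1 := key t ht
    have h2 := hfnn (ξ * t) (by positivity)
    nlinarith [hfnn t ht, le_max_left (1:ℝ) ξ]
  intro t
  rcases le_or_gt 0 t with ht | ht
  · exact main t ht
  · have h1 : f (ξ * t) = - f (ξ * (-t)) := by
      rw [← hodd]; ring_nf
    have h2 : f t = - f (-t) := by rw [← hodd]; ring_nf
    rw [h1, h2, neg_pow, neg_pow]
    simpa using main (-t) (by linarith)
end

section
/- Let N ≥ 3, 0 < α < N, and 2(N+α)/N ≤ p ≤ 2(N+α)/(N-2). Then there exist C > 0 and r ∈ [2, 2N/(N-2)) such that |f(t)|^p ≤ C·t^r and |f(t)|^{p-2}·f(t)·f'(t) ≤ C·t^{r-1} for all t ≥ 0. -/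
private lemma interp_aux {x t q s : ℝ} (hx : 0 < x) (ht : 0 < t) (h1 : x ≤ t)
    (h2 : x ^ 2 ≤ Real.sqrt 2 * t) (hsq : s ≤ q) (hqs : q ≤ 2 * s) :
    x ^ q ≤ Real.sqrt 2 ^ (q - s) * t ^ s := by
  have key : x ^ q = x ^ (2 * s - q) * (x ^ 2 : ℝ) ^ (q - s) := by
    rw [← Real.rpow_natCast x 2, ← Real.rpow_mul hx.le, ← Real.rpow_add hx]
    norm_num
    ring_nf
  have hA : x ^ (2 * s - q) ≤ t ^ (2 * s - q) :=
    Real.rpow_le_rpow hx.le h1 (by linarith)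
  have hB : (x ^ 2 : ℝ) ^ (q - s) ≤ (Real.sqrt 2 * t) ^ (q - s) :=
    Real.rpow_le_rpow (by positivity) h2 (by linarith)
  calc x ^ q = x ^ (2 * s - q) * (x ^ 2 : ℝ) ^ (q - s) := key
    _ ≤ t ^ (2 * s - q) * (Real.sqrt 2 * t) ^ (q - s) := by
        apply mul_le_mul hA hB (by positivity) (by positivity)
    _ = Real.sqrt 2 ^ (q - s) * t ^ s := by
        rw [Real.mul_rpow (Real.sqrt_nonneg 2) ht.le, ← mul_assoc,
          mul_comm (t ^ (2 * s - q)), mul_assoc, ← Real.rpow_add ht]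
        ring_nf

theorem stmt_9 (f : ℝ → ℝ) (hf0 : f 0 = 0)
    (hodd : ∀ t : ℝ, f (-t) = -f t)
    (hderiv : ∀ t : ℝ, 0 ≤ t → HasDerivAt f (1 / Real.sqrt (1 + 2 * f t ^ 2)) t)
    (N : ℕ) (hN : 3 ≤ N) (α p : ℝ) (hα : 0 < α) (hαN : α < (N : ℝ))
    (hp1 : 2 * ((N : ℝ) + α) / N ≤ p) (hp2 : p ≤ 2 * ((N : ℝ) + α) / ((N : ℝ) - 2)) :
    ∃ C : ℝ, 0 < C ∧ ∃ r : ℝ, r ∈ Set.Ico (2 : ℝ) (2 * (N : ℝ) / ((N : ℝ) - 2)) ∧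
      ∀ t : ℝ, 0 ≤ t →
        |f t| ^ p ≤ C * t ^ r ∧
        |f t| ^ (p - 2) * f t * deriv f t ≤ C * t ^ (r - 1) := by
  open Real Set in
  -- analytic facts about f
  have hsqrt1 : ∀ t : ℝ, (1:ℝ) ≤ Real.sqrt (1 + 2 * f t ^ 2) := by
    intro t
    calc (1:ℝ) = Real.sqrt 1 := by simp
      _ ≤ _ := Real.sqrt_le_sqrt (by nlinarith [sq_nonneg (f t)])
  have hd : ∀ t : ℝ, 0 ≤ t → deriv f t = 1 / Real.sqrt (1 + 2 * f t ^ 2) := fun t ht =>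
    (hderiv t ht).deriv
  have hdpos : ∀ t : ℝ, 0 ≤ t → 0 < deriv f t := by
    intro t ht
    rw [hd t ht]
    have := hsqrt1 t
    positivity
  have hdle : ∀ t : ℝ, 0 ≤ t → deriv f t ≤ 1 := by
    intro t ht
    rw [hd t ht]
    exact div_le_one_of_le₀ (hsqrt1 t) (by positivity)
  have hcont : ContinuousOn f (Ici (0:ℝ)) := fun t ht =>
    (hderiv t ht).continuousAt.continuousWithinAt
  have hmono : StrictMonoOn f (Ici (0:ℝ)) := by
    apply strictMonoOn_of_deriv_pos (convex_Ici 0) hcont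
    intro x hx
    rw [interior_Ici] at hx
    exact hdpos x hx.le
  have hfpos : ∀ t : ℝ, 0 < t → 0 < f t := by
    intro t ht
    have := hmono (self_mem_Ici) (mem_Ici.2 ht.le) ht
    rwa [hf0] at this
  have hle : ∀ t : ℝ, 0 ≤ t → f t ≤ t := by
    intro t ht
    have hm : MonotoneOn (fun x => x - f x) (Ici (0:ℝ)) := by
      apply monotoneOn_of_deriv_nonneg (convex_Ici 0)
        (continuousOn_id.sub hcont)
      · intro x hx
        rw [interior_Ici] at hx
        exact ((hasDerivAt_id x).sub (hderiv x hx.le)).differentiableAt.differentiableWithinAt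
      · intro x hx
        rw [interior_Ici] at hx
        rw [((hasDerivAt_id x).sub (hderiv x hx.le)).deriv]
        have := hdle x hx.le
        rw [hd x hx.le] at this
        linarith
    have := hm self_mem_Ici (mem_Ici.2 ht) ht
    simp [hf0] at this
    linarith
  have hsq : ∀ t : ℝ, 0 ≤ t → f t ^ 2 ≤ Real.sqrt 2 * t := by
    intro t ht
    have hm : MonotoneOn (fun x => Real.sqrt 2 * x - f x ^ 2) (Ici (0:ℝ)) := by
      apply monotoneOn_of_deriv_nonneg (convex_Ici 0)
        ((continuousOn_const.mul continuousOn_id).sub (hcont.pow 2))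
      · intro x hx
        rw [interior_Ici] at hx
        exact (((hasDerivAt_id x).const_mul (Real.sqrt 2)).sub
          ((hderiv x hx.le).pow 2)).differentiableAt.differentiableWithinAt
      · intro x hx
        rw [interior_Ici] at hx
        show 0 ≤ deriv ((fun y => Real.sqrt 2 * id y) - f ^ 2) x
        rw [(((hasDerivAt_id x).const_mul (Real.sqrt 2)).sub ((hderiv x hx.le).pow 2)).deriv]
        simp only [mul_one, pow_one]
        have h2f : 0 ≤ f x := (hfpos x hx).le
        have hkey : 2 * f x ≤ Real.sqrt 2 * Real.sqrt (1 + 2 * f x ^ 2) := by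
          rw [← Real.sqrt_mul (by norm_num : (0:ℝ) ≤ 2)]
          rw [show 2 * f x = Real.sqrt ((2 * f x) ^ 2) from
            (Real.sqrt_sq (by positivity)).symm]
          apply Real.sqrt_le_sqrt
          nlinarith
        have hkey2 : 2 * f x * (1 / Real.sqrt (1 + 2 * f x ^ 2)) ≤ Real.sqrt 2 := by
          rw [mul_one_div, div_le_iff₀ (by positivity)]
          nlinarith [Real.sqrt_nonneg 2, Real.sqrt_nonneg (1 + 2 * f x ^ 2), hsqrt1 x]
        simp only [one_div] at hkey2
        norm_num
        nlinarith [hkey2]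
    have := hm self_mem_Ici (mem_Ici.2 ht) ht
    simp [hf0] at this
    linarith
  have hffd : ∀ t : ℝ, 0 ≤ t → f t * deriv f t ≤ 1 / Real.sqrt 2 := by
    intro t ht
    rw [hd t ht, mul_one_div, div_le_div_iff₀ (by positivity) (by positivity)]
    nlinarith [Real.sq_sqrt (by norm_num : (0:ℝ) ≤ 2),
      Real.sq_sqrt (by positivity : (0:ℝ) ≤ 1 + 2 * f t ^ 2),
      Real.sqrt_nonneg 2, Real.sqrt_nonneg (1 + 2 * f t ^ 2),
      sq_nonneg (Real.sqrt 2 * f t - Real.sqrt (1 + 2 * f t ^2)),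
      sq_nonneg (Real.sqrt 2 * f t + Real.sqrt (1 + 2 * f t ^2))]
  -- arithmetic setup
  have hN3 : (3:ℝ) ≤ (N:ℝ) := by exact_mod_cast hN
  have hN2 : (0:ℝ) < (N:ℝ) - 2 := by linarith
  have hNpos : (0:ℝ) < (N:ℝ) := by linarith
  have h2p : 2 < p := by
    have : 2 < 2 * ((N : ℝ) + α) / N := by
      rw [lt_div_iff₀ hNpos]; nlinarith
    linarith
  set r : ℝ := max 2 (p / 2) with hr_def
  have hr2 : 2 ≤ r := le_max_left _ _
  have hrp2 : p / 2 ≤ r := le_max_right _ _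
  have hrp : r ≤ p := max_le h2p.le (by linarith)
  have hrlt : r < 2 * (N:ℝ) / ((N:ℝ) - 2) := by
    apply max_lt
    · rw [lt_div_iff₀ hN2]; nlinarith
    · rw [div_lt_div_iff₀ (by norm_num) hN2]
      have := (le_div_iff₀ hN2).mp hp2
      nlinarith
  have hs2 : (1:ℝ) ≤ Real.sqrt 2 := by
    calc (1:ℝ) = Real.sqrt 1 := by simp
      _ ≤ _ := Real.sqrt_le_sqrt (by norm_num)
  refine ⟨Real.sqrt 2 ^ p, by positivity, r, ⟨hr2, hrlt⟩, ?_⟩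
  intro t ht
  rcases eq_or_lt_of_le ht with h0 | htpos
  · -- t = 0
    rw [← h0]
    rw [hf0]
    constructor
    · rw [abs_zero, Real.zero_rpow (by linarith), Real.zero_rpow (by linarith)]
      simp
    · rw [abs_zero, Real.zero_rpow (by linarith), Real.zero_rpow (by linarith)]
      simp
  · -- t > 0
    have hfp : 0 < f t := hfpos t htpos
    have habs : |f t| = f t := abs_of_pos hfp
    constructor
    · rw [habs]
      have := interp_aux hfp htpos (hle t ht) (hsq t ht) hrp (by linarith)
      refine this.trans ?_
      apply mul_le_mul_of_nonneg_right _ (by positivity)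
      exact Real.rpow_le_rpow_of_exponent_le hs2 (by linarith)
    · rw [habs]
      set c : ℝ := min 1 (p - r) with hc_def
      have hc0 : 0 ≤ c := le_min (by norm_num) (by linarith)
      have hc1 : c ≤ 1 := min_le_left _ _
      have hcpr : c ≤ p - r := min_le_right _ _
      have hcbig : p + 1 - 2 * r ≤ c := by
        apply le_min <;> linarith
      have hdp := hdpos t ht
      -- f^c * f' ≤ 1
      have hstep : f t ^ c * deriv f t ≤ 1 := by
        have e1 : deriv f t = deriv f t ^ c * deriv f t ^ (1 - c) := by
          rw [← Real.rpow_add hdp]; norm_num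
        rw [e1, ← mul_assoc, ← Real.mul_rpow hfp.le hdp.le]
        have h1 : (f t * deriv f t) ^ c ≤ 1 :=
          Real.rpow_le_one (by positivity)
            ((hffd t ht).trans (by rw [div_le_one (by positivity)]; exact hs2)) hc0
        have h2 : deriv f t ^ (1 - c) ≤ 1 :=
          Real.rpow_le_one hdp.le (hdle t ht) (by linarith)
        nlinarith [Real.rpow_nonneg (mul_nonneg hfp.le hdp.le) c,
          Real.rpow_nonneg hdp.le (1 - c)]
      have hsplit : f t ^ (p - 2) * f t * deriv f t
          = f t ^ (p - 1 - c) * (f t ^ c * deriv f t) := by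
        rw [← mul_assoc, ← Real.rpow_add hfp, ← Real.rpow_add_one hfp.ne' (p - 2)]
        ring_nf
      rw [hsplit]
      have hinterp : f t ^ (p - 1 - c) ≤ Real.sqrt 2 ^ (p - 1 - c - (r - 1)) * t ^ (r - 1) :=
        interp_aux hfp htpos (hle t ht) (hsq t ht) (by linarith) (by linarith)
      calc f t ^ (p - 1 - c) * (f t ^ c * deriv f t)
          ≤ f t ^ (p - 1 - c) * 1 := by
            apply mul_le_mul_of_nonneg_left hstep (by positivity)
        _ = f t ^ (p - 1 - c) := mul_one _
        _ ≤ Real.sqrt 2 ^ (p - 1 - c - (r - 1)) * t ^ (r - 1) := hinterp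
        _ ≤ Real.sqrt 2 ^ p * t ^ (r - 1) := by
            apply mul_le_mul_of_nonneg_right _ (by positivity)
            exact Real.rpow_le_rpow_of_exponent_le hs2 (by linarith)
end

section
/- Let f satisfy f'(t) = 1/√(1+2f(t)²), f(0)=0 (odd extension), and let v ∈ H¹(ℝ^N), N ≥ 3. Set w = f(v)/f'(v) = f(v)·√(1+2f(v)²). Then ∫|w|² ≤ 4∫|v|² and ∫|∇w|² ≤ 4∫|∇v|², so w ∈ H¹(ℝ^N) with ‖w‖_{H¹} ≤ 2‖v‖_{H¹}. -/
open MeasureTheory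

theorem stmt_15 (f : ℝ → ℝ) (hf0 : f 0 = 0)
    (hodd : ∀ t : ℝ, f (-t) = -f t)
    (hderiv : ∀ t : ℝ, HasDerivAt f (1 / Real.sqrt (1 + 2 * f t ^ 2)) t)
    (N : ℕ) (hN : 3 ≤ N)
    (v : EuclideanSpace ℝ (Fin N) → ℝ) (hv : Differentiable ℝ v)
    (hv2 : MemLp v 2 volume)
    (hvg : MemLp (fun x => ‖fderiv ℝ v x‖) 2 volume)
    (w : EuclideanSpace ℝ (Fin N) → ℝ)
    (hw : ∀ x, w x = f (v x) * Real.sqrt (1 + 2 * f (v x) ^ 2)) :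
    (∫ x, w x ^ 2) ≤ 4 * (∫ x, v x ^ 2) ∧
    (∫ x, ‖fderiv ℝ w x‖ ^ 2) ≤ 4 * (∫ x, ‖fderiv ℝ v x‖ ^ 2) ∧
    MemLp w 2 volume ∧ MemLp (fun x => ‖fderiv ℝ w x‖) 2 volume ∧
    Real.sqrt ((∫ x, w x ^ 2) + ∫ x, ‖fderiv ℝ w x‖ ^ 2) ≤
      2 * Real.sqrt ((∫ x, v x ^ 2) + ∫ x, ‖fderiv ℝ v x‖ ^ 2) := by
  set g : ℝ → ℝ := fun t => f t * Real.sqrt (1 + 2 * f t ^ 2) with hg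
  set c : ℝ → ℝ := fun t => 1 + 2 * f t ^ 2 / (1 + 2 * f t ^ 2) with hc
  have hupos : ∀ t : ℝ, (0:ℝ) < 1 + 2 * f t ^ 2 := fun t => by positivity
  have hsqpos : ∀ t : ℝ, (0:ℝ) < Real.sqrt (1 + 2 * f t ^ 2) := fun t =>
    Real.sqrt_pos.2 (hupos t)
  have hgderiv : ∀ t : ℝ, HasDerivAt g (c t) t := by
    intro t
    have h1 : HasDerivAt (fun t => 1 + 2 * f t ^ 2)
        (2 * (2 * f t ^ 1 * (1 / Real.sqrt (1 + 2 * f t ^ 2)))) t :=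
      (((hderiv t).pow 2).const_mul 2).const_add 1
    have h2 := (Real.hasDerivAt_sqrt (ne_of_gt (hupos t))).comp t h1
    have h3 := (hderiv t).mul h2
    convert h3 using 1
    · rfl
    · rfl
    · rfl
    have hs := hsqpos t
    have hsq : Real.sqrt (1 + 2 * f t ^ 2) * Real.sqrt (1 + 2 * f t ^ 2)
        = 1 + 2 * f t ^ 2 := Real.mul_self_sqrt (le_of_lt (hupos t))
    simp only [hc, Function.comp_def]
    rw [← hsq]
    field_simp
    ring_nf
    rw [Real.sq_sqrt (show (0:ℝ) ≤ 1 + f t ^ 2 * 2 by positivity)]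
    linear_combination (2 * f t ^ 2) * Real.sq_sqrt (show (0:ℝ) ≤ 1 + f t ^ 2 * 2 by positivity)
  have hc1 : ∀ t : ℝ, 1 ≤ c t := by
    intro t
    have h := hupos t
    have : 0 ≤ 2 * f t ^ 2 / (1 + 2 * f t ^ 2) := by positivity
    simp only [hc]; linarith
  have hc2 : ∀ t : ℝ, c t ≤ 2 := by
    intro t
    have h := hupos t
    have : 2 * f t ^ 2 / (1 + 2 * f t ^ 2) ≤ 1 := by
      rw [div_le_one h]; linarith
    simp only [hc]; linarith
  -- pointwise bound |g t| ≤ 2 |t|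
  have hgbound : ∀ t : ℝ, |g t| ≤ 2 * |t| := by
    intro t
    have g0 : g 0 = 0 := by simp [hg, hf0]
    have := convex_univ.norm_image_sub_le_of_norm_hasDerivWithin_le
      (f := g) (f' := c) (C := 2)
      (fun x _ => (hgderiv x).hasDerivWithinAt)
      (fun x _ => by
        rw [Real.norm_eq_abs, abs_of_nonneg (le_trans zero_le_one (hc1 x))]
        exact hc2 x)
      (Set.mem_univ 0) (Set.mem_univ t)
    simpa [g0, Real.norm_eq_abs] using this
  -- w = g ∘ v
  have hwg : w = g ∘ v := funext fun x => hw x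
  have hwfderiv : ∀ x, fderiv ℝ w x = c (v x) • fderiv ℝ v x := by
    intro x
    have h := (hgderiv (v x)).comp_hasFDerivAt x (hv x).hasFDerivAt
    rw [hwg]
    exact h.fderiv
  have hwb : ∀ x, |w x| ≤ 2 * |v x| := fun x => by rw [hw x]; exact hgbound (v x)
  have hwdb : ∀ x, ‖fderiv ℝ w x‖ ≤ 2 * ‖fderiv ℝ v x‖ := by
    intro x
    rw [hwfderiv x, norm_smul, Real.norm_eq_abs,
      abs_of_nonneg (le_trans zero_le_one (hc1 (v x)))]
    exact mul_le_mul_of_nonneg_right (hc2 (v x)) (norm_nonneg _)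
  -- MemLp facts
  have hgcont : Continuous g :=
    continuous_iff_continuousAt.2 fun t => (hgderiv t).continuousAt
  have hfcont : Continuous f :=
    continuous_iff_continuousAt.2 fun t => (hderiv t).continuousAt
  have hccont : Continuous c := by
    apply Continuous.add continuous_const
    exact ((continuous_const.mul (hfcont.pow 2)).div
      (continuous_const.add (continuous_const.mul (hfcont.pow 2)))
      fun t => (hupos t).ne')
  have hwcont : Continuous w := by rw [hwg]; exact hgcont.comp hv.continuous
  have hw2 : MemLp w 2 volume := by
    apply MemLp.of_le (hv2.const_mul 2) hwcont.aestronglyMeasurable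
    filter_upwards with x
    rw [Real.norm_eq_abs, Real.norm_eq_abs, abs_mul]
    have := hwb x
    have h2 : |(2:ℝ)| = 2 := by norm_num
    rw [h2]
    exact this
  have hmeasDw : AEStronglyMeasurable (fun x => ‖fderiv ℝ w x‖) volume := by
    have h1 : Measurable (fderiv ℝ v) := measurable_fderiv ℝ v
    have h2 : Measurable (fun x => c (v x)) :=
      (hccont.comp hv.continuous).measurable
    have h3 : Measurable (fun x => c (v x) • fderiv ℝ v x) := h2.smul h1
    have h4 : (fun x => ‖fderiv ℝ w x‖) = fun x => ‖c (v x) • fderiv ℝ v x‖ := by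
      funext x; rw [hwfderiv x]
    rw [h4]
    exact h3.norm.aestronglyMeasurable
  have hwg2 : MemLp (fun x => ‖fderiv ℝ w x‖) 2 volume := by
    apply MemLp.of_le (hvg.const_mul 2) hmeasDw
    filter_upwards with x
    rw [Real.norm_eq_abs, abs_of_nonneg (norm_nonneg _), Real.norm_eq_abs, abs_mul]
    have h2 : |(2:ℝ)| = 2 := by norm_num
    rw [h2, abs_of_nonneg (norm_nonneg _)]
    exact hwdb x
  -- integral inequalities
  have hintw : Integrable (fun x => w x ^ 2) volume := hw2.integrable_sq
  have hintv : Integrable (fun x => v x ^ 2) volume := hv2.integrable_sq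
  have hintDw : Integrable (fun x => ‖fderiv ℝ w x‖ ^ 2) volume := by
    have := hwg2.integrable_sq
    exact this
  have hintDv : Integrable (fun x => ‖fderiv ℝ v x‖ ^ 2) volume := by
    have := hvg.integrable_sq
    exact this
  have key1 : (∫ x, w x ^ 2) ≤ 4 * (∫ x, v x ^ 2) := by
    rw [← integral_const_mul]
    apply integral_mono hintw (hintv.const_mul 4)
    intro x
    have h := hwb x
    have := sq_abs (w x)
    calc w x ^ 2 = |w x| ^ 2 := (sq_abs (w x)).symm
      _ ≤ (2 * |v x|) ^ 2 := by
          apply pow_le_pow_left₀ (abs_nonneg _) h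
      _ = 4 * v x ^ 2 := by rw [mul_pow, sq_abs]; ring
  have key2 : (∫ x, ‖fderiv ℝ w x‖ ^ 2) ≤ 4 * (∫ x, ‖fderiv ℝ v x‖ ^ 2) := by
    rw [← integral_const_mul]
    apply integral_mono hintDw (hintDv.const_mul 4)
    intro x
    calc ‖fderiv ℝ w x‖ ^ 2 ≤ (2 * ‖fderiv ℝ v x‖) ^ 2 := by
          apply pow_le_pow_left₀ (norm_nonneg _) (hwdb x)
      _ = 4 * ‖fderiv ℝ v x‖ ^ 2 := by ring
  refine ⟨key1, key2, hw2, hwg2, ?_⟩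
  have hA : (0:ℝ) ≤ ∫ x, v x ^ 2 := integral_nonneg fun x => sq_nonneg _
  have hB : (0:ℝ) ≤ ∫ x, ‖fderiv ℝ v x‖ ^ 2 := integral_nonneg fun x => sq_nonneg _
  calc Real.sqrt ((∫ x, w x ^ 2) + ∫ x, ‖fderiv ℝ w x‖ ^ 2)
      ≤ Real.sqrt (4 * ((∫ x, v x ^ 2) + ∫ x, ‖fderiv ℝ v x‖ ^ 2)) := by
        apply Real.sqrt_le_sqrt; linarith
    _ = 2 * Real.sqrt ((∫ x, v x ^ 2) + ∫ x, ‖fderiv ℝ v x‖ ^ 2) := by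
        rw [Real.sqrt_mul (by norm_num : (0:ℝ) ≤ 4),
          show Real.sqrt 4 = 2 by
            rw [show (4:ℝ) = 2 ^ 2 by norm_num,
              Real.sqrt_sq (by norm_num : (0:ℝ) ≤ 2)]]
end
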